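/- Let μ be the geometric-type distribution on ℤ≥0 with μ(k) proportional to s^k (c·(k+1)) for s ∈ (0,1) (i.e., G(k) = k+1). Then the marginal of the uniform-weight stationary measure μ_{N,L}(ξ) ∝ Π_x (ξ(x)+1) on Ω_N(L) satisfies, for every site x and 0 ≤ c ≤ L: μ_{N,L}(ξ(x) = c) = (c+1) · C(L-c+2N-3, 2N-3) / C(L+2N-1, 2N-1), where C(n,k) denotes the binomial coefficient. -/
import Mathlib


open Finset

/-- The configuration space `Ω_N(L)`: tuples of `N` non-negative integers summing to `L`. -/
def conf (N L : ℕ) : Finset (Fin N → ℕ) :=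
  (Fintype.piFinset fun _ => range (L + 1)).filter fun ξ => ∑ x, ξ x = L

lemma mem_conf {N L : ℕ} {ξ : Fin N → ℕ} : ξ ∈ conf N L ↔ ∑ x, ξ x = L := by
  simp only [conf, mem_filter, Fintype.mem_piFinset, mem_range, and_iff_right_iff_imp]
  intro h y
  have : ξ y ≤ ∑ x, ξ x := Finset.single_le_sum (fun i _ => Nat.zero_le _) (mem_univ y)
  omega

/-- Fiber decomposition: fixing coordinate `x` to value `c ≤ L`. -/
lemma sum_conf_fiber (N L : ℕ) (x : Fin (N + 1)) (c : ℕ) (hc : c ≤ L) :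
    ∑ ξ ∈ (conf (N + 1) L).filter (fun ξ => ξ x = c), ∏ y, (ξ y + 1)
      = (c + 1) * ∑ η ∈ conf N (L - c), ∏ y, (η y + 1) := by
  rw [Finset.mul_sum]
  refine Finset.sum_nbij' (fun ξ => Fin.removeNth x ξ) (fun η => Fin.insertNth x c η)
    ?_ ?_ ?_ ?_ ?_
  · intro ξ hξ
    rw [mem_filter, mem_conf] at hξ
    rw [mem_conf]
    have := Fin.sum_univ_succAbove ξ x
    simp only [Fin.removeNth]
    omega
  · intro η hη
    rw [mem_conf] at hη
    rw [mem_filter, mem_conf]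
    constructor
    · rw [Fin.sum_univ_succAbove _ x]
      simp [hη]
      omega
    · simp
  · intro ξ hξ
    rw [mem_filter] at hξ
    rw [← hξ.2]
    exact Fin.insertNth_self_removeNth x ξ
  · intro η _
    exact Fin.removeNth_insertNth (α := fun _ => ℕ) x c η
  · intro ξ hξ
    rw [mem_filter] at hξ
    rw [Fin.prod_univ_succAbove (fun y => ξ y + 1) x, hξ.2]
    rfl

/-- Hockey stick. -/
lemma hockey (r : ℕ) : ∀ M : ℕ, ∑ m ∈ range (M + 1), (m + r).choose r
    = (M + r + 1).choose (r + 1) := by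
  intro M
  induction M with
  | zero => simp
  | succ M ih =>
      rw [Finset.sum_range_succ, ih]
      have : M + 1 + r + 1 = (M + r + 1) + 1 := by omega
      rw [this, Nat.choose_succ_succ (M + r + 1) r]
      have : M + 1 + r = M + r + 1 := by omega
      rw [this]
      simp only [Nat.succ_eq_add_one]
      omega

lemma key_sum (r : ℕ) : ∀ L : ℕ, ∑ k ∈ range (L + 1), (k + 1) * ((L - k + r).choose r)
    = (L + r + 2).choose (r + 2) := by
  intro L
  induction L with
  | zero => simp
  | succ L ih =>
      rw [Finset.sum_range_succ']
      have h1 : ∀ k, L + 1 - (k + 1) = L - k := fun k => by omega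
      have h2 : (∑ k ∈ range (L + 1), (k + 1 + 1) * ((L + 1 - (k + 1) + r).choose r))
          = (∑ k ∈ range (L + 1), (k + 1) * ((L - k + r).choose r))
            + ∑ k ∈ range (L + 1), (L - k + r).choose r := by
        rw [← Finset.sum_add_distrib]
        refine Finset.sum_congr rfl fun k _ => by rw [h1]; ring
      rw [h2, ih]
      have h3 : ∑ k ∈ range (L + 1), (L - k + r).choose r
          = ∑ m ∈ range (L + 1), (m + r).choose r := by
        refine Finset.sum_nbij' (fun k => L - k) (fun m => L - m) ?_ ?_ ?_ ?_ ?_ <;>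
          intro a ha <;> simp only [mem_range] at * <;> first | omega | (congr 1; omega)
      rw [h3, hockey]
      have e1 : L + 1 + r + 2 = (L + r + 2) + 1 := by omega
      have e2 : L + 1 - 0 + r = L + r + 1 := by omega
      rw [e1, e2, Nat.choose_succ_succ (L + r + 2) (r + 1)]
      simp only [Nat.succ_eq_add_one]
      have e4 : (L + r + 2).choose (r + 1)
          = (L + r + 1).choose r + (L + r + 1).choose (r + 1) := by
        rw [show L + r + 2 = (L + r + 1) + 1 from rfl]
        rw [Nat.choose_succ_succ]
      simp only [show r + 1 + 1 = r + 2 from rfl] at *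
      omega

/-- The partition function. -/
lemma Zval (N : ℕ) : ∀ L : ℕ, (∑ ξ ∈ conf (N + 1) L, ∏ y, (ξ y + 1))
    = (L + 2 * N + 1).choose (2 * N + 1) := by
  induction N with
  | zero =>
      intro L
      have hconf : conf 1 L = {fun _ => L} := by
        ext ξ
        simp only [mem_conf, Fin.sum_univ_one, mem_singleton]
        constructor
        · intro h; funext i; rw [Subsingleton.elim i 0]; exact h
        · intro h; rw [h]
      rw [hconf]
      simp [Nat.choose_one_right]
  | succ N ih =>
      intro L
      have hmaps : ∀ ξ ∈ conf (N + 2) L, ξ 0 ∈ range (L + 1) := by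
        intro ξ hξ
        rw [mem_conf] at hξ
        rw [mem_range]
        have : ξ 0 ≤ ∑ x, ξ x := Finset.single_le_sum (fun i _ => Nat.zero_le _) (mem_univ 0)
        omega
      rw [← Finset.sum_fiberwise_of_maps_to hmaps]
      have : ∀ k ∈ range (L + 1),
          (∑ ξ ∈ (conf (N + 2) L).filter (fun ξ => ξ 0 = k), ∏ y, (ξ y + 1))
          = (k + 1) * ((L - k + (2 * N + 1)).choose (2 * N + 1)) := by
        intro k hk
        rw [mem_range] at hk
        rw [sum_conf_fiber (N + 1) L 0 k (by omega), ih (L - k)]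
        have e : L - k + 2 * N + 1 = L - k + (2 * N + 1) := by omega
        rw [e]
      rw [Finset.sum_congr rfl this, key_sum (2 * N + 1) L]
      congr 1 <;> omega

/-- For the uniform-weight stationary measure
`μ_{N,L}(ξ) ∝ Π_x (ξ(x)+1)` on `Ω_N(L)` (the case `G(k) = k+1`), the one-site
marginal satisfies, for every site `x` and `0 ≤ c ≤ L`,
`μ_{N,L}(ξ(x) = c) = (c+1) C(L-c+2N-3, 2N-3) / C(L+2N-1, 2N-1)`. -/
theorem stmt14 (N L : ℕ) (hN : 2 ≤ N) (x : Fin N) (c : ℕ) (hc : c ≤ L) :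
    (∑ ξ ∈ (conf N L).filter (fun ξ => ξ x = c), ∏ y, ((ξ y : ℝ) + 1))
        / (∑ ξ ∈ conf N L, ∏ y, ((ξ y : ℝ) + 1))
    = ((c : ℝ) + 1) * (Nat.choose (L - c + 2 * N - 3) (2 * N - 3) : ℝ)
        / (Nat.choose (L + 2 * N - 1) (2 * N - 1) : ℝ) := by
  obtain ⟨M, rfl⟩ : ∃ M, N = M + 2 := ⟨N - 2, by omega⟩
  have hnum : (∑ ξ ∈ (conf (M + 2) L).filter (fun ξ => ξ x = c), ∏ y, ((ξ y : ℝ) + 1))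
      = ((∑ ξ ∈ (conf (M + 2) L).filter (fun ξ => ξ x = c), ∏ y, (ξ y + 1) : ℕ) : ℝ) := by
    push_cast; rfl
  have hden : (∑ ξ ∈ conf (M + 2) L, ∏ y, ((ξ y : ℝ) + 1))
      = ((∑ ξ ∈ conf (M + 2) L, ∏ y, (ξ y + 1) : ℕ) : ℝ) := by
    push_cast; rfl
  rw [hnum, hden, sum_conf_fiber (M + 1) L x c hc, Zval (M + 1) L, Zval M (L - c)]
  have e1 : L - c + 2 * (M + 2) - 3 = L - c + 2 * M + 1 := by omega
  have e2 : 2 * (M + 2) - 3 = 2 * M + 1 := by omega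
  have e3 : L + 2 * (M + 2) - 1 = L + 2 * (M + 1) + 1 := by omega
  have e4 : 2 * (M + 2) - 1 = 2 * (M + 1) + 1 := by omega
  rw [e1, e2, e3, e4]
  push_cast
  ring
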